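/- arXiv:1604.06021 — 3 statements merged into one kernel-verified Lean document; each statement's English description precedes it below -/
import Mathlib

section
/- Let E ⊆ ℝ² be a measurable set with 0 < μ(E) < ∞ (μ the Lebesgue measure), let N ≥ 1 and let ν : Fin N → ℝ² be a finite family of points (the vertices). Let v : ℝ² → ℝ be differentiable with derivative integrable on E. Then there exists a unique affine map q : ℝ² → ℝ such that (i) ∫_E ⟪∇q(x) − ∇v(x), c⟫ dx = 0 for every constant vector c ∈ ℝ², and (ii) (1/N)·∑_{i} q(ν_i) = (1/N)·∑_{i} v(ν_i). -/
set_option maxHeartbeats 1000000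


open MeasureTheory
open scoped RealInnerProductSpace

private lemma aff_gradient (q : AffineMap ℝ (EuclideanSpace ℝ (Fin 2)) ℝ)
    (x : EuclideanSpace ℝ (Fin 2)) :
    gradient (⇑q) x =
      (InnerProductSpace.toDual ℝ _).symm (LinearMap.toContinuousLinearMap q.linear) := by
  have h : HasFDerivAt (⇑q) (LinearMap.toContinuousLinearMap q.linear) x := by
    have hq : ⇑q = fun y => (LinearMap.toContinuousLinearMap q.linear) y + q 0 := by
      funext y
      have h0 := congrFun (AffineMap.decomp q) y
      simp only [Pi.add_apply] at h0
      exact h0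
    rw [hq]
    exact ((LinearMap.toContinuousLinearMap q.linear).hasFDerivAt).add_const _
  unfold gradient
  rw [h.fderiv]

private lemma aff_gradient_inner (q : AffineMap ℝ (EuclideanSpace ℝ (Fin 2)) ℝ)
    (x c : EuclideanSpace ℝ (Fin 2)) :
    ⟪gradient (⇑q) x, c⟫ = q.linear c := by
  rw [aff_gradient]
  exact InnerProductSpace.toDual_symm_apply

/-- Well-definedness of the Ritz projector Π∇ of the lowest-order virtual element
method: for any `v` differentiable with gradient integrable on `E`, there is a unique
affine map `q` whose gradient differs from that of `v` orthogonally (in the `L²(E)`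
sense) to every constant vector field, and whose vertex-average matches that of `v`. -/
theorem ritz_projector_well_defined
    (E : Set (EuclideanSpace ℝ (Fin 2))) (hE : MeasurableSet E)
    (hpos : 0 < volume E) (hfin : volume E < ⊤)
    (N : ℕ) (hN : 1 ≤ N) (ν : Fin N → EuclideanSpace ℝ (Fin 2))
    (v : EuclideanSpace ℝ (Fin 2) → ℝ)
    (hv : Differentiable ℝ v)
    (hint : IntegrableOn (gradient v) E volume) :
    ∃! q : AffineMap ℝ (EuclideanSpace ℝ (Fin 2)) ℝ,
      (∀ c : EuclideanSpace ℝ (Fin 2),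
        ∫ x in E, ⟪gradient (⇑q) x - gradient v x, c⟫ = 0) ∧
      (1 / (N : ℝ)) * ∑ i, q (ν i) = (1 / (N : ℝ)) * ∑ i, v (ν i) := by
  set μE : ℝ := (volume E).toReal with hμE
  have hμpos : 0 < μE := ENNReal.toReal_pos hpos.ne' hfin.ne
  set I : EuclideanSpace ℝ (Fin 2) := ∫ x in E, gradient v x with hI
  set g : EuclideanSpace ℝ (Fin 2) := μE⁻¹ • I with hg
  -- the key characterization of condition (i)
  have key : ∀ q : AffineMap ℝ (EuclideanSpace ℝ (Fin 2)) ℝ,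
      (∀ c, ∫ x in E, ⟪gradient (⇑q) x - gradient v x, c⟫ = 0) ↔
        (∀ c : EuclideanSpace ℝ (Fin 2), q.linear c = ⟪g, c⟫) := by
    intro q
    set w : EuclideanSpace ℝ (Fin 2) :=
      (InnerProductSpace.toDual ℝ _).symm (LinearMap.toContinuousLinearMap q.linear) with hw
    have hgradq : gradient (⇑q) = fun _ => w := funext fun x => aff_gradient q x
    have hqw : ∀ c : EuclideanSpace ℝ (Fin 2), q.linear c = ⟪w, c⟫ := by
      intro c
      rw [hw, InnerProductSpace.toDual_symm_apply]
      rfl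
    rw [hgradq]
    have hcalc : ∀ c : EuclideanSpace ℝ (Fin 2),
        ∫ x in E, ⟪w - gradient v x, c⟫ = ⟪μE • w - I, c⟫ := by
      intro c
      have hsub : IntegrableOn (fun x => w - gradient v x) E volume :=
        (integrableOn_const hfin.ne).sub hint
      have h1 : ∫ x in E, ⟪w - gradient v x, c⟫
          = ∫ x in E, ⟪c, w - gradient v x⟫ := by
        simp_rw [real_inner_comm]
      rw [h1, integral_inner hsub c, real_inner_comm]
      congr 1
      rw [integral_sub (integrableOn_const hfin.ne : IntegrableOn (fun _ => w) E volume) hint, setIntegral_const]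
      rfl
    constructor
    · intro h c
      have hall : ∀ c : EuclideanSpace ℝ (Fin 2), ⟪μE • w - I, c⟫ = 0 :=
        fun c => by rw [← hcalc c]; exact h c
      have hz : μE • w - I = 0 := by
        have := hall (μE • w - I)
        rwa [real_inner_self_eq_norm_sq, pow_eq_zero_iff (by norm_num), norm_eq_zero] at this
      have hwg : w = g := by
        have hI' : μE • w = I := by linear_combination (norm := abel) hz
        rw [hg, ← hI', smul_smul, inv_mul_cancel₀ hμpos.ne', one_smul]
      rw [hqw c, hwg]
    · intro h c
      have hwg : w = g := by
        apply ext_inner_right ℝ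
        intro c
        rw [← hqw c, h c]
      rw [hcalc c, hwg, hg, smul_smul, mul_inv_cancel₀ hμpos.ne', one_smul, sub_self,
        inner_zero_left]
  -- build the candidate affine map
  set c0 : ℝ := (1 / (N : ℝ)) * (∑ i, v (ν i)) - (1 / (N : ℝ)) * (∑ i, ⟪g, ν i⟫) with hc0
  set L : EuclideanSpace ℝ (Fin 2) →ₗ[ℝ] ℝ := (InnerProductSpace.toDual ℝ _ g).toLinearMap
    with hL
  set q₀ : AffineMap ℝ (EuclideanSpace ℝ (Fin 2)) ℝ :=
    { toFun := fun x => ⟪g, x⟫ + c0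
      linear := L
      map_vadd' := by
        intro p u
        simp [hL, InnerProductSpace.toDual_apply_apply, inner_add_right]
        ring } with hq₀
  have hq₀app : ∀ x, q₀ x = ⟪g, x⟫ + c0 := fun _ => rfl
  have hq₀lin : ∀ c, q₀.linear c = ⟪g, c⟫ := fun c => rfl
  have hNpos : (0 : ℝ) < N := by exact_mod_cast hN
  refine ⟨q₀, ⟨(key q₀).2 hq₀lin, ?_⟩, ?_⟩
  · simp_rw [hq₀app]
    rw [Finset.sum_add_distrib, Finset.sum_const, Finset.card_univ, Fintype.card_fin,
      nsmul_eq_mul, mul_add, hc0]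
    field_simp
    try ring
  · intro q' ⟨h1, h2⟩
    have hlin : q'.linear = q₀.linear := by
      apply LinearMap.ext
      intro c
      rw [(key q').1 h1 c, hq₀lin]
    have hconst : q' 0 = q₀ 0 := by
      have e1 : ∀ (q : AffineMap ℝ (EuclideanSpace ℝ (Fin 2)) ℝ) i, q (ν i) =
          q.linear (ν i) + q 0 := by
        intro q i
        conv_lhs => rw [AffineMap.decomp q]
        rfl
      have h2' := h2
      simp_rw [e1] at h2'
      have h3 : (1 / (N : ℝ)) * ∑ i, q₀ (ν i) = (1 / (N : ℝ)) * ∑ i, v (ν i) := by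
        simp_rw [hq₀app]
        rw [Finset.sum_add_distrib, Finset.sum_const, Finset.card_univ, Fintype.card_fin,
          nsmul_eq_mul, mul_add, hc0]
        field_simp
        try ring
      simp_rw [e1] at h3
      rw [← h3] at h2'
      simp_rw [hlin] at h2'
      rw [Finset.sum_add_distrib, Finset.sum_add_distrib] at h2'
      have := mul_left_cancel₀ (a := 1 / (N : ℝ)) (by positivity) h2'
      have h4 := add_left_cancel this
      rw [Finset.sum_const, Finset.sum_const, Finset.card_univ, Fintype.card_fin,
        nsmul_eq_mul, nsmul_eq_mul] at h4
      exact mul_left_cancel₀ hNpos.ne' h4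
    apply AffineMap.ext
    intro x
    conv_lhs => rw [AffineMap.decomp q']
    conv_rhs => rw [AffineMap.decomp q₀]
    simp [hlin, hconst]
end

section
/- Let N ≥ 1, let D be a real N×3 matrix and B̃ a real 3×N matrix such that the 3×3 matrix B̃D is invertible, and set Π := (B̃D)⁻¹B̃. Let B be the 3×N matrix whose first row is zero and whose second and third rows coincide with those of B̃, let G := B·D, and let K := Πᵀ·G·Π + (I_N − DΠ)ᵀ·(I_N − DΠ). Then Dᵀ·K = G·Π = B. -/
open Matrix

/-- Matrix form of the polynomial consistency property (patch test) of the
lowest-order VEM local stiffness matrix: with `Π = (B̃D)⁻¹B̃`, `B` equal to `B̃` with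
its first row zeroed, `G = BD`, and `K = ΠᵀGΠ + (I − DΠ)ᵀ(I − DΠ)`, one has
`DᵀK = GΠ = B`. -/
theorem vem_patch_test
    (N : ℕ) (hN : 1 ≤ N)
    (D : Matrix (Fin N) (Fin 3) ℝ) (Bt : Matrix (Fin 3) (Fin N) ℝ)
    (h : IsUnit (Bt * D))
    (B : Matrix (Fin 3) (Fin N) ℝ)
    (hB0 : ∀ j, B 0 j = 0)
    (hB : ∀ i : Fin 3, i ≠ 0 → ∀ j, B i j = Bt i j)
    (Proj : Matrix (Fin 3) (Fin N) ℝ) (hProj : Proj = (Bt * D)⁻¹ * Bt)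
    (G : Matrix (Fin 3) (Fin 3) ℝ) (hG : G = B * D)
    (K : Matrix (Fin N) (Fin N) ℝ)
    (hK : K = Projᵀ * G * Proj +
      ((1 : Matrix (Fin N) (Fin N) ℝ) - D * Proj)ᵀ *
        ((1 : Matrix (Fin N) (Fin N) ℝ) - D * Proj)) :
    Dᵀ * K = G * Proj ∧ G * Proj = B := by
  have hdet : IsUnit (Bt * D).det := (Matrix.isUnit_iff_isUnit_det _).mp h
  have hPD : Proj * D = 1 := by
    rw [hProj, Matrix.mul_assoc, Matrix.nonsing_inv_mul _ hdet]
  have hBtDP : Bt * (D * Proj) = Bt := by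
    rw [hProj, ← Matrix.mul_assoc, ← Matrix.mul_assoc,
      Matrix.mul_nonsing_inv _ hdet, Matrix.one_mul]
  have hBDP : B * (D * Proj) = B := by
    ext i j
    by_cases hi : i = 0
    · subst hi
      simp [Matrix.mul_apply, hB0]
    · have : (B * (D * Proj)) i j = (Bt * (D * Proj)) i j := by
        simp only [Matrix.mul_apply]
        exact Finset.sum_congr rfl fun k _ => by rw [hB i hi k]
      rw [this, hBtDP, hB i hi j]
  have hGP : G * Proj = B := by
    rw [hG, Matrix.mul_assoc, hBDP]
  refine ⟨?_, hGP⟩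
  have hX : ((1 : Matrix (Fin N) (Fin N) ℝ) - D * Proj) * D = 0 := by
    rw [Matrix.sub_mul, Matrix.one_mul, Matrix.mul_assoc, hPD, Matrix.mul_one,
      sub_self]
  have h1 : Dᵀ * Projᵀ = 1 := by
    rw [← Matrix.transpose_mul, hPD, Matrix.transpose_one]
  have h2 : Dᵀ * ((1 : Matrix (Fin N) (Fin N) ℝ) - D * Proj)ᵀ = 0 := by
    rw [← Matrix.transpose_mul, hX, Matrix.transpose_zero]
  rw [hK, Matrix.mul_add, ← Matrix.mul_assoc, ← Matrix.mul_assoc, h1,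
    Matrix.one_mul, ← Matrix.mul_assoc, h2, Matrix.zero_mul, add_zero]
end

section
/- Let N ≥ 1, let D be a real N×3 matrix and B̃ a real 3×N matrix such that the 3×3 matrix B̃D is invertible, and set Π := (B̃D)⁻¹B̃. Let G be any symmetric positive semidefinite 3×3 real matrix and let K := Πᵀ·G·Π + (I_N − DΠ)ᵀ·(I_N − DΠ). Then for v ∈ ℝ^N one has Kv = 0 if and only if there exists c ∈ ℝ³ with v = Dc and Gc = 0; that is, the kernel of K is the image under D of the kernel of G. -/
open Matrix

/-- Kernel characterisation of the lowest-order VEM local stiffness matrix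
`K = ΠᵀGΠ + (I − DΠ)ᵀ(I − DΠ)`: with `Π = (B̃D)⁻¹B̃` and `G` symmetric positive
semidefinite, `Kv = 0` iff `v = Dc` for some `c` with `Gc = 0`; i.e. the kernel of
`K` is the image under `D` of the kernel of `G`. -/
theorem vem_stiffness_matrix_kernel
    (N : ℕ) (hN : 1 ≤ N)
    (D : Matrix (Fin N) (Fin 3) ℝ) (Bt : Matrix (Fin 3) (Fin N) ℝ)
    (h : IsUnit (Bt * D))
    (Proj : Matrix (Fin 3) (Fin N) ℝ) (hProj : Proj = (Bt * D)⁻¹ * Bt)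
    (G : Matrix (Fin 3) (Fin 3) ℝ) (hGsymm : G.IsSymm) (hGpsd : G.PosSemidef)
    (K : Matrix (Fin N) (Fin N) ℝ)
    (hK : K = Projᵀ * G * Proj +
      ((1 : Matrix (Fin N) (Fin N) ℝ) - D * Proj)ᵀ *
        ((1 : Matrix (Fin N) (Fin N) ℝ) - D * Proj)) :
    ∀ v : Fin N → ℝ, K *ᵥ v = 0 ↔ ∃ c : Fin 3 → ℝ, v = D *ᵥ c ∧ G *ᵥ c = 0 := by

  have hPD : Proj * D = 1 := by
    rw [hProj, Matrix.mul_assoc]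
    exact Matrix.nonsing_inv_mul _ ((Matrix.isUnit_iff_isUnit_det _).mp h)
  set M : Matrix (Fin N) (Fin N) ℝ := (1 : Matrix (Fin N) (Fin N) ℝ) - D * Proj with hM
  intro v
  constructor
  · intro hv
    -- the quadratic form of K at v vanishes
    have hquad : v ⬝ᵥ (K *ᵥ v) = 0 := by rw [hv, dotProduct_zero]
    have hsplit : v ⬝ᵥ (K *ᵥ v)
        = (Proj *ᵥ v) ⬝ᵥ (G *ᵥ (Proj *ᵥ v)) + (M *ᵥ v) ⬝ᵥ (M *ᵥ v) := by
      rw [hK, Matrix.add_mulVec, dotProduct_add]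
      congr 1
      · rw [← Matrix.mulVec_mulVec, ← Matrix.mulVec_mulVec, Matrix.dotProduct_mulVec,
          Matrix.vecMul_transpose]
      · rw [← Matrix.mulVec_mulVec, Matrix.dotProduct_mulVec, Matrix.vecMul_transpose]
    have h1 : 0 ≤ (Proj *ᵥ v) ⬝ᵥ (G *ᵥ (Proj *ᵥ v)) := by
      simpa using hGpsd.dotProduct_mulVec_nonneg (Proj *ᵥ v)
    have h2 : 0 ≤ (M *ᵥ v) ⬝ᵥ (M *ᵥ v) := by
      simpa using dotProduct_self_star_nonneg (M *ᵥ v)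
    have h1z : (Proj *ᵥ v) ⬝ᵥ (G *ᵥ (Proj *ᵥ v)) = 0 := by
      rw [hsplit] at hquad; linarith
    have h2z : (M *ᵥ v) ⬝ᵥ (M *ᵥ v) = 0 := by
      rw [hsplit] at hquad; linarith
    have hGc : G *ᵥ (Proj *ᵥ v) = 0 := by
      have := (hGpsd.dotProduct_mulVec_zero_iff (Proj *ᵥ v)).mp (by simpa using h1z)
      exact this
    have hMv : M *ᵥ v = 0 := dotProduct_self_eq_zero.mp h2z
    refine ⟨Proj *ᵥ v, ?_, hGc⟩
    have hsub : v - D *ᵥ (Proj *ᵥ v) = 0 := by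
      simpa [hM, Matrix.sub_mulVec, Matrix.one_mulVec, Matrix.mulVec_mulVec] using hMv
    exact sub_eq_zero.mp hsub
  · intro ⟨c, hvc, hGc⟩
    have hProjv : Proj *ᵥ v = c := by
      rw [hvc, Matrix.mulVec_mulVec, hPD, Matrix.one_mulVec]
    have hMv : M *ᵥ v = 0 := by
      rw [hM, Matrix.sub_mulVec, Matrix.one_mulVec, ← Matrix.mulVec_mulVec, hProjv, hvc,
        sub_self]
    rw [hK, Matrix.add_mulVec, ← Matrix.mulVec_mulVec, ← Matrix.mulVec_mulVec, hProjv, hGc,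
      Matrix.mulVec_zero, ← Matrix.mulVec_mulVec, hMv, Matrix.mulVec_zero, add_zero]
end
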